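/- arXiv:1704.08436 — 2 statements merged into one kernel-verified Lean document; each statement's English description precedes it below -/
import Mathlib

section
/- Let u : ℝ³ → ℝ³ and p : ℝ³ → ℝ be twice continuously differentiable and satisfy the steady incompressible Euler equation (u·∇)u = −∇p. Let φ : I → ℝ³ be a C³ arclength streamline (φ′(s) = u(φ(s))/|u(φ(s))|, u(φ(s)) ≠ 0) with curvature κ(s) = |φ″(s)| > 0 continuously differentiable, unit tangent τ = φ′, unit normal n = φ″/κ, binormal b = τ × n, and torsion T defined by n′ = −κτ + T b. Then for all s ∈ I: −(Hess p)(φ(s))[τ(s), n(s)] = 3κ(s) D(s) + κ′(s) |u(φ(s))|², where D(s) := −⟨∇p(φ(s)), τ(s)⟩ is the material derivative of the speed |u| along the streamline and (Hess p)[v,w] denotes the second derivative bilinear form of p applied to the vectors v, w. (This is the first identity of the paper's Lemma rewriting the Euler equations via curvature: ∂_{r̄} D_t|u| = 3κ D_t|u| + ∂_s κ |u|².) -/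
/-- Cross product on `EuclideanSpace ℝ (Fin 3)`. -/
noncomputable def cross3 (v w : EuclideanSpace ℝ (Fin 3)) : EuclideanSpace ℝ (Fin 3) :=
  (WithLp.equiv 2 (Fin 3 → ℝ)).symm
    ![v 1 * w 2 - v 2 * w 1, v 2 * w 0 - v 0 * w 2, v 0 * w 1 - v 1 * w 0]

lemma inner_cross3_left' (v w : EuclideanSpace ℝ (Fin 3)) :
    (inner ℝ v (cross3 v w) : ℝ) = 0 := by
  simp [cross3, PiLp.inner_apply, Fin.sum_univ_three]; ring

lemma inner_cross3_right' (v w : EuclideanSpace ℝ (Fin 3)) :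
    (inner ℝ w (cross3 v w) : ℝ) = 0 := by
  simp [cross3, PiLp.inner_apply, Fin.sum_univ_three]; ring

lemma grad_inner' (p : EuclideanSpace ℝ (Fin 3) → ℝ) (z y : EuclideanSpace ℝ (Fin 3)) :
    (inner ℝ (gradient p z) y : ℝ) = fderiv ℝ p z y :=
  InnerProductSpace.toDual_symm_apply

/-- First curvature identity for the steady Euler equations along a C³
arclength streamline: `−(Hess p)[τ, n] = 3κ D + κ′ |u|²`, where `D = −⟨∇p, τ⟩` is the
material derivative of the speed (the paper's `∂_{r̄} D_t|u| = 3κ D_t|u| + ∂_s κ |u|²`). -/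
theorem euler_curvature_identity_normal
    (u : EuclideanSpace ℝ (Fin 3) → EuclideanSpace ℝ (Fin 3))
    (p : EuclideanSpace ℝ (Fin 3) → ℝ)
    (hu : ContDiff ℝ 2 u) (hp : ContDiff ℝ 2 p)
    (heuler : ∀ x, fderiv ℝ u x (u x) = - gradient p x)
    (hdiv : ∀ x, LinearMap.trace ℝ (EuclideanSpace ℝ (Fin 3))
      ((fderiv ℝ u x).toLinearMap) = 0)
    (I : Set ℝ) (hI : IsOpen I)
    (φ φ' φ'' φ''' : ℝ → EuclideanSpace ℝ (Fin 3))
    (hφ' : ∀ s ∈ I, HasDerivAt φ (φ' s) s)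
    (hφ'' : ∀ s ∈ I, HasDerivAt φ' (φ'' s) s)
    (hφ''' : ∀ s ∈ I, HasDerivAt φ'' (φ''' s) s)
    (hune : ∀ s ∈ I, u (φ s) ≠ 0)
    (hstream : ∀ s ∈ I, φ' s = ‖u (φ s)‖⁻¹ • u (φ s))
    (κ κ' : ℝ → ℝ) (hκ : ∀ s ∈ I, κ s = ‖φ'' s‖) (hκpos : ∀ s ∈ I, 0 < κ s)
    (hκ' : ∀ s ∈ I, HasDerivAt κ (κ' s) s)
    (τ n b : ℝ → EuclideanSpace ℝ (Fin 3))
    (hτ : ∀ s ∈ I, τ s = φ' s) (hn : ∀ s ∈ I, n s = (κ s)⁻¹ • φ'' s)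
    (hb : ∀ s ∈ I, b s = cross3 (τ s) (n s))
    (T : ℝ → ℝ)
    (hT : ∀ s ∈ I, HasDerivAt n (-(κ s) • τ s + T s • b s) s)
    (D : ℝ → ℝ) (hD : ∀ s ∈ I, D s = -(inner ℝ (gradient p (φ s)) (τ s) : ℝ)) :
    ∀ s ∈ I,
      -((fderiv ℝ (fderiv ℝ p) (φ s) (τ s)) (n s))
        = 3 * κ s * D s + κ' s * ‖u (φ s)‖ ^ 2 := by
  -- derivative of u ∘ φ along the streamline (Euler)
  have hg : ∀ t ∈ I, HasDerivAt (fun r => u (φ r))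
      (-(‖u (φ t)‖⁻¹ • gradient p (φ t))) t := by
    intro t ht
    have h1 := ((hu.differentiable two_ne_zero) (φ t)).hasFDerivAt.comp_hasDerivAt t (hφ' t ht)
    refine h1.congr_deriv ?_
    rw [hstream t ht, map_smul, heuler (φ t), smul_neg]
  -- orthogonality of φ' and φ''
  have hortho : ∀ t ∈ I, (inner ℝ (φ' t) (φ'' t) : ℝ) = 0 := by
    intro t ht
    have h1 : HasDerivAt (fun r => (inner ℝ (φ' r) (φ' r) : ℝ))
        ((inner ℝ (φ' t) (φ'' t) : ℝ) + (inner ℝ (φ'' t) (φ' t) : ℝ)) t :=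
      HasDerivAt.inner ℝ (hφ'' t ht) (hφ'' t ht)
    have hunit : ∀ r ∈ I, (inner ℝ (φ' r) (φ' r) : ℝ) = 1 := by
      intro r hr
      have hq : ‖u (φ r)‖ ≠ 0 := norm_ne_zero_iff.2 (hune r hr)
      rw [hstream r hr, real_inner_smul_left, real_inner_smul_right,
        real_inner_self_eq_norm_mul_norm]
      field_simp
    have h2 : HasDerivAt (fun r => (inner ℝ (φ' r) (φ' r) : ℝ)) 0 t := by
      refine (hasDerivAt_const t (1:ℝ)).congr_of_eventuallyEq ?_
      filter_upwards [hI.mem_nhds ht] with r hr using hunit r hr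
    have h3 := h1.unique h2
    linarith [h3, real_inner_comm (φ'' t) (φ' t)]
  -- inner of u∘φ with its derivative is D
  have hinngg' : ∀ t ∈ I,
      (inner ℝ (u (φ t)) (-(‖u (φ t)‖⁻¹ • gradient p (φ t))) : ℝ) = D t := by
    intro t ht
    have hq : ‖u (φ t)‖ ≠ 0 := norm_ne_zero_iff.2 (hune t ht)
    rw [hD t ht, hτ t ht, hstream t ht, inner_neg_right, real_inner_smul_right,
      real_inner_smul_right, real_inner_comm]
  -- derivative of the speed squared
  have hQder : ∀ t ∈ I, HasDerivAt (fun r => ‖u (φ r)‖ ^ 2) (2 * D t) t := by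
    intro t ht
    have h1 := HasDerivAt.inner ℝ (hg t ht) (hg t ht)
    have h2 : (fun r => (inner ℝ (u (φ r)) (u (φ r)) : ℝ)) = fun r => ‖u (φ r)‖ ^ 2 := by
      funext r; rw [real_inner_self_eq_norm_sq]
    rw [h2] at h1
    refine h1.congr_deriv ?_
    rw [hinngg' t ht, real_inner_comm, hinngg' t ht]
    ring
  -- derivative of the speed
  have hqder : ∀ t ∈ I, HasDerivAt (fun r => ‖u (φ r)‖) (D t / ‖u (φ t)‖) t := by
    intro t ht
    have hq : ‖u (φ t)‖ ≠ 0 := norm_ne_zero_iff.2 (hune t ht)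
    have hQ2 : (‖u (φ t)‖ ^ 2 : ℝ) ≠ 0 := pow_ne_zero _ hq
    have h1 := (Real.hasDerivAt_sqrt hQ2).comp t (hQder t ht)
    have h2 : (fun r => Real.sqrt (‖u (φ r)‖ ^ 2)) = fun r => ‖u (φ r)‖ := by
      funext r; rw [Real.sqrt_sq (norm_nonneg _)]
    rw [Function.comp_def, h2] at h1
    refine h1.congr_deriv ?_
    rw [Real.sqrt_sq (norm_nonneg _)]
    field_simp
  -- decomposition of the pressure gradient
  have hgrad : ∀ t ∈ I, gradient p (φ t)
      = (-(D t)) • φ' t + (-(‖u (φ t)‖ ^ 2)) • φ'' t := by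
    intro t ht
    have hq : ‖u (φ t)‖ ≠ 0 := norm_ne_zero_iff.2 (hune t ht)
    have h1 : HasDerivAt (fun r => ‖u (φ r)‖ • φ' r)
        (‖u (φ t)‖ • φ'' t + (D t / ‖u (φ t)‖) • φ' t) t :=
      HasDerivAt.smul (hqder t ht) (hφ'' t ht)
    have h2 : HasDerivAt (fun r => u (φ r))
        (‖u (φ t)‖ • φ'' t + (D t / ‖u (φ t)‖) • φ' t) t := by
      refine h1.congr_of_eventuallyEq ?_
      filter_upwards [hI.mem_nhds ht] with r hr
      rw [hstream r hr, smul_smul, mul_inv_cancel₀ (norm_ne_zero_iff.2 (hune r hr)), one_smul]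
    have h3 := (hg t ht).unique h2
    have h4 : gradient p (φ t)
        = (-‖u (φ t)‖) • (‖u (φ t)‖ • φ'' t + (D t / ‖u (φ t)‖) • φ' t) := by
      rw [← h3, smul_neg, neg_smul, neg_neg, smul_smul, mul_inv_cancel₀ hq, one_smul]
    rw [h4, smul_add, smul_smul, smul_smul, add_comm]
    congr 1
    · congr 1; field_simp
    · congr 1; ring
  -- value of fderiv p along the normal
  have hFval : ∀ t ∈ I, fderiv ℝ p (φ t) (n t) = -(‖u (φ t)‖ ^ 2 * κ t) := by
    intro t ht
    have hκ0 : κ t ≠ 0 := (hκpos t ht).ne'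
    rw [← grad_inner', hgrad t ht, hn t ht, inner_add_left, real_inner_smul_left,
      real_inner_smul_left, real_inner_smul_right, real_inner_smul_right,
      hortho t ht, real_inner_self_eq_norm_sq, ← hκ t ht]
    field_simp
    ring
  intro s hs
  have hκ0 : κ s ≠ 0 := (hκpos s hs).ne'
  -- derivative of t ↦ fderiv p (φ t)
  have hP : HasDerivAt (fun t => fderiv ℝ p (φ t))
      (fderiv ℝ (fderiv ℝ p) (φ s) (φ' s)) s := by
    have h1 : ContDiff ℝ 1 (fderiv ℝ p) := hp.fderiv_right (le_refl _)
    exact ((h1.differentiable one_ne_zero (φ s)).hasFDerivAt).comp_hasDerivAt s (hφ' s hs)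
  -- derivative of F = fderiv p (φ t) (n t), first way
  have hF1 : HasDerivAt (fun t => fderiv ℝ p (φ t) (n t))
      (fderiv ℝ (fderiv ℝ p) (φ s) (φ' s) (n s)
        + fderiv ℝ p (φ s) (-(κ s) • τ s + T s • b s)) s :=
    hP.clm_apply (hT s hs)
  -- second way
  have hF2 : HasDerivAt (fun t => fderiv ℝ p (φ t) (n t))
      (-(2 * D s * κ s + ‖u (φ s)‖ ^ 2 * κ' s)) s := by
    refine (((hQder s hs).mul (hκ' s hs)).neg).congr_of_eventuallyEq ?_
    filter_upwards [hI.mem_nhds hs] with r hr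
    rw [hFval r hr]; rfl
  have hkey := hF1.unique hF2
  -- fderiv p (φ s) (τ s) = -(D s)
  have hpτ : fderiv ℝ p (φ s) (τ s) = -(D s) := by
    rw [hD s hs, neg_neg, grad_inner']
  -- fderiv p (φ s) (b s) = 0
  have hpb : fderiv ℝ p (φ s) (b s) = 0 := by
    rw [← grad_inner', hgrad s hs, hb s hs, hτ s hs, inner_add_left,
      real_inner_smul_left, real_inner_smul_left]
    have h1 : (inner ℝ (φ' s) (cross3 (φ' s) (n s)) : ℝ) = 0 := inner_cross3_left' _ _
    have h2 : (inner ℝ (φ'' s) (cross3 (φ' s) (n s)) : ℝ) = 0 := by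
      have hφ''n : φ'' s = κ s • n s := by
        rw [hn s hs, smul_smul, mul_inv_cancel₀ hκ0, one_smul]
      rw [hφ''n, real_inner_smul_left, inner_cross3_right' _ _, mul_zero]
    rw [h1, h2]
    ring
  rw [map_add, map_smul, map_smul, hpτ, hpb, smul_eq_mul, smul_eq_mul] at hkey
  have hτs : τ s = φ' s := hτ s hs
  rw [hτs]
  linarith [hkey]
end

section
/- Let v_r, v_z : [0,∞) × ℝ → ℝ be continuously differentiable with v_z > 0 everywhere and ∂_r(r v_r) + r ∂_z v_z = 0 for all r ≥ 0, z ∈ ℝ. Let R̃ : (0,∞) × ℝ → (0,∞) be continuously differentiable in both variables with R̃(r̃₀, 0) = r̃₀, ∂_z R̃(r̃₀, z) = v_r(R̃(r̃₀, z), z)/v_z(R̃(r̃₀, z), z), and ∂_{r̃₀} R̃ > 0. Define the inflow propagation ρ(r̃₀, z) := 2 r̃₀ / ∂_{r̃₀}[ R̃(r̃₀, z)² ] and the inflow profile U_in(r̃₀) := v_z(r̃₀, 0). Then for all (r̃₀, z): v_z( R̃(r̃₀, z), z ) = ρ(r̃₀, z) · U_in(r̃₀), and v_r( R̃(r̃₀,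 z), z ) = ∂_z R̃(r̃₀, z) · v_z( R̃(r̃₀, z), z ). -/
open MeasureTheory Set intervalIntegral

set_option maxHeartbeats 4000000

/-- Explicit formulas for an axisymmetric divergence-free field in terms
of its stream surfaces `R̃(r̃₀, ·)` and the inflow propagation
`ρ = 2r̃₀/∂_{r̃₀}(R̃²)`: one has `v_z(R̃(r̃₀,z), z) = ρ(r̃₀,z) · U_in(r̃₀)` with
`U_in(r̃₀) = v_z(r̃₀, 0)`, and `v_r(R̃(r̃₀,z), z) = ∂_z R̃(r̃₀,z) · v_z(R̃(r̃₀,z), z)`. -/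
theorem velocity_formulas_from_inflow_propagation
    (vr vz : ℝ → ℝ → ℝ)
    (hreg : ContDiffOn ℝ 1 (fun q : ℝ × ℝ => (vr q.1 q.2, vz q.1 q.2))
      {q : ℝ × ℝ | 0 ≤ q.1})
    (hvz : ∀ r z : ℝ, 0 < vz r z)
    (hdivfree : ∀ r z : ℝ, 0 ≤ r →
      deriv (fun r' => r' * vr r' z) r + r * deriv (fun z' => vz r z') z = 0)
    (R : ℝ → ℝ → ℝ)
    (hRreg : ContDiffOn ℝ 1 (fun q : ℝ × ℝ => R q.1 q.2) {q : ℝ × ℝ | 0 < q.1})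
    (hRpos : ∀ r₀ z : ℝ, 0 < r₀ → 0 < R r₀ z)
    (hR0 : ∀ r₀ : ℝ, 0 < r₀ → R r₀ 0 = r₀)
    (hRz : ∀ r₀ z : ℝ, 0 < r₀ →
      HasDerivAt (fun z' => R r₀ z') (vr (R r₀ z) z / vz (R r₀ z) z) z)
    (hRr : ∀ r₀ z : ℝ, 0 < r₀ → 0 < deriv (fun r => R r z) r₀)
    (ρ : ℝ → ℝ → ℝ)
    (hρ : ρ = fun r₀ z => 2 * r₀ / deriv (fun r => R r z ^ 2) r₀)
    (Uin : ℝ → ℝ) (hUin : Uin = fun r₀ => vz r₀ 0) :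
    ∀ r₀ z : ℝ, 0 < r₀ →
      vz (R r₀ z) z = ρ r₀ z * Uin r₀
        ∧ vr (R r₀ z) z = deriv (fun z' => R r₀ z') z * vz (R r₀ z) z := by
  set S : Set (ℝ × ℝ) := {q : ℝ × ℝ | 0 ≤ q.1} with hSdef
  have hUopen : IsOpen {q : ℝ × ℝ | 0 < q.1} := isOpen_lt continuous_const continuous_fst
  have hUS : {q : ℝ × ℝ | 0 < q.1} ⊆ S := fun q hq => show (0:ℝ) ≤ q.1 from le_of_lt hq
  have hSnhds : ∀ q : ℝ × ℝ, 0 < q.1 → S ∈ nhds q := fun q hq =>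
    Filter.mem_of_superset (hUopen.mem_nhds hq) hUS
  have hSconv : Convex ℝ S := by
    have h1 : S = Set.Ici (0:ℝ) ×ˢ (Set.univ : Set ℝ) := by
      ext q; simp [hSdef, Set.mem_prod]
    rw [h1]; exact (convex_Ici 0).prod convex_univ
  have hSud : UniqueDiffOn ℝ S := by
    refine uniqueDiffOn_convex hSconv ⟨(1, 0), ?_⟩
    rw [mem_interior_iff_mem_nhds]; exact hSnhds (1, 0) one_pos
  -- continuity facts
  have CF : ContinuousOn (fun q : ℝ × ℝ => (vr q.1 q.2, vz q.1 q.2)) S := hreg.continuousOn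
  have Cvz : ContinuousOn (fun q : ℝ × ℝ => vz q.1 q.2) S := continuous_snd.comp_continuousOn CF
  have Cvr : ContinuousOn (fun q : ℝ × ℝ => vr q.1 q.2) S := continuous_fst.comp_continuousOn CF
  have CH : ContinuousOn (fun q : ℝ × ℝ => q.1 * vz q.1 q.2) S :=
    continuous_fst.continuousOn.mul Cvz
  have hmap : ∀ w : ℝ, Set.MapsTo (fun s : ℝ => (s, w)) (Set.Ici 0) S :=
    fun w s hs => hs
  have CHw : ∀ w : ℝ, ContinuousOn (fun s : ℝ => s * vz s w) (Set.Ici 0) := by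
    intro w
    exact (CH.comp ((continuous_id.prodMk continuous_const).continuousOn) (hmap w))
  have CHrw : ∀ w : ℝ, ContinuousOn (fun s : ℝ => s * vr s w) (Set.Ici 0) := by
    intro w
    exact (continuous_id.continuousOn.mul
      (Cvr.comp ((continuous_id.prodMk continuous_const).continuousOn) (hmap w)))
  have huIcc : ∀ x y : ℝ, 0 ≤ x → 0 ≤ y → Set.uIcc x y ⊆ Set.Ici 0 := by
    intro x y hx hy s hs
    rcases Set.mem_uIcc.1 hs with h | h
    · exact le_trans hx h.1
    · exact le_trans hy h.1
  have Hint : ∀ (w x y : ℝ), 0 ≤ x → 0 ≤ y →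
      IntervalIntegrable (fun s => s * vz s w) volume x y := by
    intro w x y hx hy
    exact ((CHw w).mono (huIcc x y hx hy)).intervalIntegrable
  -- fderiv facts
  set L := fderivWithin ℝ (fun q : ℝ × ℝ => (vr q.1 q.2, vz q.1 q.2)) S with hLdef
  have CL : ContinuousOn L S := hreg.continuousOn_fderivWithin hSud le_rfl
  have hdiffF : ∀ q : ℝ × ℝ, 0 < q.1 →
      HasFDerivAt (fun q : ℝ × ℝ => (vr q.1 q.2, vz q.1 q.2)) (L q) q := by
    intro q hq
    have hca : ContDiffAt ℝ 1 (fun q : ℝ × ℝ => (vr q.1 q.2, vz q.1 q.2)) q :=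
      hreg.contDiffAt (hSnhds q hq)
    have hd : DifferentiableAt ℝ (fun q : ℝ × ℝ => (vr q.1 q.2, vz q.1 q.2)) q :=
      hca.differentiableAt one_ne_zero
    have h2 := hd.hasFDerivAt
    rwa [hLdef, fderivWithin_eq_fderiv (hSud q (hUS hq)) hd]
  have hvzD : ∀ r w : ℝ, 0 < r →
      HasDerivAt (fun z' => vz r z') ((L (r, w)) (0, 1)).2 w := by
    intro r w hr
    have h1 : HasDerivAt (fun z' : ℝ => ((r : ℝ), z')) ((0 : ℝ), (1 : ℝ)) w :=
      (hasDerivAt_const w r).prodMk (hasDerivAt_id w)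
    have h2 := (hdiffF (r, w) hr).comp_hasDerivAt w h1
    have h3 := (ContinuousLinearMap.snd ℝ ℝ ℝ).hasFDerivAt.comp_hasDerivAt w h2
    simpa [Function.comp_def] using h3
  have hvrDA : ∀ s w : ℝ, 0 < s → DifferentiableAt ℝ (fun r' => vr r' w) s := by
    intro s w hs
    have h1 : DifferentiableAt ℝ (fun r' : ℝ => ((r' : ℝ), w)) s :=
      differentiableAt_id.prodMk (differentiableAt_const w)
    have h2 := ((hdiffF (s, w) hs).differentiableAt.comp s h1)
    exact (ContinuousLinearMap.fst ℝ ℝ ℝ).differentiable.differentiableAt.comp s h2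
  have CL2 : ContinuousOn (fun q : ℝ × ℝ => ((L q) (0, 1)).2) S :=
    continuous_snd.comp_continuousOn (CL.clm_apply continuousOn_const)
  -- Stage 1: conservation of flux along stream surfaces
  have keyint : ∀ r : ℝ, 0 < r → ∀ w : ℝ,
      (∫ s in (0:ℝ)..(R r w), s * vz s w) = ∫ s in (0:ℝ)..r, s * vz s 0 := by
    intro r hr
    set g : ℝ → ℝ := fun w => ∫ s in (0:ℝ)..(R r w), s * vz s w with hgdef
    have hgd : ∀ w₀ : ℝ, HasDerivAt g 0 w₀ := by
      intro w₀
      set a : ℝ := R r w₀ with hadef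
      have ha : 0 < a := hRpos r w₀ hr
      set P : ℝ → ℝ := fun w => ∫ s in (0:ℝ)..a, s * vz s w with hPdef
      set Q : ℝ → ℝ := fun w => ∫ s in a..(R r w), s * vz s w with hQdef
      have hsplit : ∀ w : ℝ, g w = P w + Q w := by
        intro w
        rw [hgdef, hPdef, hQdef]
        exact (integral_add_adjacent_intervals (Hint w 0 a le_rfl ha.le)
          (Hint w a (R r w) ha.le (hRpos r w hr).le)).symm
      -- derivative of P (dominated convergence)
      obtain ⟨M, hM⟩ :=
        (isCompact_Icc (a := ((0:ℝ), w₀ - 1)) (b := (a, w₀ + 1))).exists_bound_of_continuousOn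
          (CL.mono (by
            intro q hq
            have := hq.1
            exact (this.1 : (0:ℝ) ≤ q.1)))
      have hPder : HasDerivAt P (∫ t in (0:ℝ)..a, t * ((L (t, w₀)) (0, 1)).2) w₀ := by
        have hbound : ∀ᵐ t ∂volume, t ∈ Set.uIoc (0:ℝ) a → ∀ x ∈ Metric.ball w₀ 1,
            ‖t * ((L (t, x)) (0, 1)).2‖ ≤ a * M := by
          refine Filter.Eventually.of_forall ?_
          intro t ht x hx
          rw [Set.uIoc_of_le ha.le] at ht
          have hxd := abs_lt.1 (by simpa [Real.dist_eq] using hx : |x - w₀| < 1)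
          have hxmem : (t, x) ∈ Set.Icc ((0:ℝ), w₀ - 1) (a, w₀ + 1) := by
            simp only [Set.mem_Icc, Prod.mk_le_mk]
            exact ⟨⟨ht.1.le, by linarith [hxd.1]⟩, ⟨ht.2, by linarith [hxd.2]⟩⟩
          have h1 : ‖((L (t, x)) (0, 1)).2‖ ≤ ‖(L (t, x)) ((0:ℝ), (1:ℝ))‖ :=
            norm_snd_le _
          have h2 : ‖(L (t, x)) ((0:ℝ), (1:ℝ))‖ ≤ ‖L (t, x)‖ * ‖((0:ℝ), (1:ℝ))‖ :=
            (L (t, x)).le_opNorm _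
          have h3 : ‖((0:ℝ), (1:ℝ))‖ = 1 := by
            simp [Prod.norm_def]
          have h4 : ‖((L (t, x)) (0, 1)).2‖ ≤ M := by
            have := hM (t, x) hxmem
            nlinarith [norm_nonneg ((L (t,x)) ((0:ℝ),(1:ℝ)))]
          rw [norm_mul]
          have ht0 : 0 ≤ t := ht.1.le
          have : ‖t‖ = t := abs_of_nonneg ht0
          rw [this]
          exact mul_le_mul ht.2 h4 (norm_nonneg _) ha.le
        have hdiff : ∀ᵐ t ∂volume, t ∈ Set.uIoc (0:ℝ) a → ∀ x ∈ Metric.ball w₀ 1,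
            HasDerivAt (fun x => t * vz t x) (t * ((L (t, x)) (0, 1)).2) x := by
          refine Filter.Eventually.of_forall ?_
          intro t ht x _
          rw [Set.uIoc_of_le ha.le] at ht
          exact (hvzD t x ht.1).const_mul t
        have hFmeas : ∀ᶠ x in nhds w₀, AEStronglyMeasurable (fun s => s * vz s x)
            (volume.restrict (Set.uIoc (0:ℝ) a)) := by
          refine Filter.Eventually.of_forall ?_
          intro x
          exact ((CHw x).mono (by rw [Set.uIoc_of_le ha.le]; exact fun s hs => hs.1.le)
            ).aestronglyMeasurable measurableSet_uIoc
        have hF'meas : AEStronglyMeasurable (fun t => t * ((L (t, w₀)) (0, 1)).2)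
            (volume.restrict (Set.uIoc (0:ℝ) a)) := by
          have hc : ContinuousOn (fun t : ℝ => t * ((L (t, w₀)) (0, 1)).2) (Set.Ici 0) :=
            continuous_id.continuousOn.mul
              (CL2.comp ((continuous_id.prodMk continuous_const).continuousOn) (hmap w₀))
          exact (hc.mono (by rw [Set.uIoc_of_le ha.le]; exact fun s hs => hs.1.le)
            ).aestronglyMeasurable measurableSet_uIoc
        exact (hasDerivAt_integral_of_dominated_loc_of_deriv_le (Metric.ball_mem_nhds w₀ one_pos) hFmeas
          (Hint w₀ 0 a le_rfl ha.le) hF'meas hbound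
          (intervalIntegrable_const) hdiff).2
      -- identify the derivative of P via the divergence-free condition
      have hval : (∫ t in (0:ℝ)..a, t * ((L (t, w₀)) (0, 1)).2) = -(a * vr a w₀) := by
        have hcont : ContinuousOn (fun s : ℝ => s * vr s w₀) (Set.Icc 0 a) :=
          (CHrw w₀).mono (fun s hs => hs.1)
        have hint : IntervalIntegrable (fun s : ℝ => -(s * ((L (s, w₀)) (0, 1)).2))
            volume 0 a := by
          have hc : ContinuousOn (fun t : ℝ => t * ((L (t, w₀)) (0, 1)).2) (Set.Ici 0) :=
            continuous_id.continuousOn.mul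
              (CL2.comp ((continuous_id.prodMk continuous_const).continuousOn) (hmap w₀))
          exact ((hc.mono (huIcc 0 a le_rfl ha.le)).neg).intervalIntegrable
        have hderiv : ∀ x ∈ Set.Ioo (0:ℝ) a, HasDerivWithinAt (fun s : ℝ => s * vr s w₀)
            (-(x * ((L (x, w₀)) (0, 1)).2)) (Set.Ioi x) x := by
          intro x hx
          have hx0 : 0 < x := hx.1
          have hdmul : DifferentiableAt ℝ (fun r' => r' * vr r' w₀) x :=
            differentiableAt_id.mul (hvrDA x w₀ hx0)
          have hda := hdmul.hasDerivAt
          have hdz : deriv (fun z' => vz x z') w₀ = ((L (x, w₀)) (0, 1)).2 :=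
            (hvzD x w₀ hx0).deriv
          have hdf := hdivfree x w₀ hx0.le
          rw [hdz] at hdf
          have heq : deriv (fun r' => r' * vr r' w₀) x = -(x * ((L (x, w₀)) (0, 1)).2) := by
            linarith
          rw [heq] at hda
          exact hda.hasDerivWithinAt
        have hFTC := intervalIntegral.integral_eq_sub_of_hasDeriv_right_of_le ha.le
          hcont hderiv hint
        rw [intervalIntegral.integral_neg] at hFTC
        have : (0:ℝ) * vr 0 w₀ = 0 := by ring
        rw [this] at hFTC
        linarith
      -- derivative of Q (moving endpoint)
      have hΨ : HasFDerivAt (fun p : ℝ × ℝ => ∫ s in a..p.1, s * vz s p.2)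
          ((ContinuousLinearMap.fst ℝ ℝ ℝ).smulRight (a * vz a w₀)) (a, w₀) := by
        rw [hasFDerivAt_iff_isLittleO_nhds_zero]
        rw [Asymptotics.isLittleO_iff]
        intro c hc
        have hCA : ContinuousAt (fun q : ℝ × ℝ => q.1 * vz q.1 q.2) (a, w₀) :=
          CH.continuousAt (hSnhds (a, w₀) ha)
        rcases Metric.continuousAt_iff.1 hCA c hc with ⟨δ, hδ, hball⟩
        have hδ' : 0 < min δ a := lt_min hδ ha
        filter_upwards [Metric.ball_mem_nhds (0 : ℝ × ℝ) hδ'] with h hh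
        have hnorm : ‖h‖ < min δ a := by simpa using hh
        have hh1 : |h.1| ≤ ‖h‖ := by
          rw [Prod.norm_def]; exact le_max_left _ _
        have hh2 : |h.2| ≤ ‖h‖ := by
          rw [Prod.norm_def]; exact le_max_right _ _
        set b : ℝ := a + h.1 with hbdef
        have hb0 : 0 ≤ b := by
          have : |h.1| < a := lt_of_le_of_lt hh1 (lt_of_lt_of_le hnorm (min_le_right _ _))
          have := abs_lt.1 this
          rw [hbdef]; linarith [this.1]
        have hIint : IntervalIntegrable (fun s => s * vz s (w₀ + h.2)) volume a b :=
          Hint (w₀ + h.2) a b ha.le hb0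
        have hsub : (∫ s in a..b, s * vz s (w₀ + h.2)) - h.1 * (a * vz a w₀)
            = ∫ s in a..b, (s * vz s (w₀ + h.2) - a * vz a w₀) := by
          rw [intervalIntegral.integral_sub hIint intervalIntegrable_const]
          rw [intervalIntegral.integral_const, smul_eq_mul, hbdef]
          ring
        have hbnd : ∀ s ∈ Set.uIoc a b, ‖s * vz s (w₀ + h.2) - a * vz a w₀‖ ≤ c := by
          intro s hs
          have hsa : |s - a| ≤ |h.1| := by
            rcases Set.mem_uIoc.1 hs with h' | h'
            · rw [abs_le]
              exact ⟨by linarith [h'.1, neg_abs_le h.1, abs_nonneg h.1, hbdef],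
                by linarith [h'.2, le_abs_self h.1, hbdef]⟩
            · rw [abs_le]
              exact ⟨by linarith [h'.1, neg_abs_le h.1, hbdef],
                by linarith [h'.2, le_abs_self h.1, abs_nonneg h.1, hbdef]⟩
          have hdist : dist ((s, w₀ + h.2) : ℝ × ℝ) (a, w₀) < δ := by
            rw [Prod.dist_eq]
            have e1 : dist s a < δ := by
              rw [Real.dist_eq]
              calc |s - a| ≤ |h.1| := hsa
                _ ≤ ‖h‖ := hh1
                _ < min δ a := hnorm
                _ ≤ δ := min_le_left _ _
            have e2 : dist (w₀ + h.2) w₀ < δ := by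
              rw [Real.dist_eq]
              calc |w₀ + h.2 - w₀| = |h.2| := by congr 1; ring
                _ ≤ ‖h‖ := hh2
                _ < min δ a := hnorm
                _ ≤ δ := min_le_left _ _
            exact max_lt e1 e2
          have := hball hdist
          rw [Real.dist_eq] at this
          exact le_of_lt (by simpa using this)
        have hest := intervalIntegral.norm_integral_le_of_norm_le_const hbnd
        rw [← hsub] at hest
        have hba : |b - a| = |h.1| := by rw [hbdef]; congr 1; ring
        rw [hba] at hest
        have hgoal : ‖(∫ s in a..b, s * vz s (w₀ + h.2)) - h.1 * (a * vz a w₀)‖ ≤ c * ‖h‖ :=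
          le_trans hest (mul_le_mul_of_nonneg_left hh1 hc.le)
        simpa [hbdef, intervalIntegral.integral_same] using hgoal
      -- derivative of Q via chain rule
      have hRzw := hRz r w₀ hr
      have hpair : HasDerivAt (fun w => ((R r w, w) : ℝ × ℝ))
          (vr a w₀ / vz a w₀, 1) w₀ := hRzw.prodMk (hasDerivAt_id w₀)
      have hQder : HasDerivAt Q ((vr a w₀ / vz a w₀) * (a * vz a w₀)) w₀ := by
        have h2 := HasFDerivAt.comp_hasDerivAt (f := fun w => ((R r w, w) : ℝ × ℝ)) w₀ hΨ hpair
        simpa [hQdef, Function.comp_def] using h2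
      have hgder : HasDerivAt g ((∫ t in (0:ℝ)..a, t * ((L (t, w₀)) (0, 1)).2)
          + (vr a w₀ / vz a w₀) * (a * vz a w₀)) w₀ := by
        have h1 := hPder.add hQder
        exact h1.congr_of_eventuallyEq (Filter.Eventually.of_forall hsplit)
      have hzero : (∫ t in (0:ℝ)..a, t * ((L (t, w₀)) (0, 1)).2)
          + (vr a w₀ / vz a w₀) * (a * vz a w₀) = 0 := by
        rw [hval]
        field_simp [(hvz a w₀).ne']
        try ring
      rw [hzero] at hgder
      exact hgder
    intro w
    have hconst : g w = g 0 :=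
      is_const_of_deriv_eq_zero (fun x => (hgd x).differentiableAt)
        (fun x => (hgd x).deriv) w 0
    have h0 : g 0 = ∫ s in (0:ℝ)..r, s * vz s 0 := by
      simp only [hgdef]
      rw [hR0 r hr]
    exact hconst.trans h0
  -- Stage 2: differentiate the conserved flux in the inflow radius
  intro r₀ z hr₀
  set b : ℝ := R r₀ z with hbdef2
  have hb : 0 < b := hRpos r₀ z hr₀
  have hd : 0 < deriv (fun r => R r z) r₀ := hRr r₀ z hr₀
  have hRdiff : DifferentiableAt ℝ (fun r => R r z) r₀ := by
    have hca : ContDiffAt ℝ 1 (fun q : ℝ × ℝ => R q.1 q.2) (r₀, z) :=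
      hRreg.contDiffAt (hUopen.mem_nhds hr₀)
    have h1 : DifferentiableAt ℝ (fun q : ℝ × ℝ => R q.1 q.2) (r₀, z) :=
      hca.differentiableAt one_ne_zero
    have h2 : DifferentiableAt ℝ (fun r : ℝ => ((r, z) : ℝ × ℝ)) r₀ :=
      differentiableAt_id.prodMk (differentiableAt_const z)
    exact h1.comp r₀ h2
  have hRd : HasDerivAt (fun r => R r z) (deriv (fun r => R r z) r₀) r₀ := hRdiff.hasDerivAt
  have hmeasb : StronglyMeasurableAtFilter (fun s : ℝ => s * vz s z) (nhds b) :=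
    ContinuousOn.stronglyMeasurableAtFilter isOpen_Ioi ((CHw z).mono Ioi_subset_Ici_self) b hb
  have hcontb : ContinuousAt (fun s : ℝ => s * vz s z) b :=
    ((CHw z).mono Ioi_subset_Ici_self).continuousAt (isOpen_Ioi.mem_nhds hb)
  have hΦ : HasDerivAt (fun y => ∫ s in (0:ℝ)..y, s * vz s z) (b * vz b z) b :=
    intervalIntegral.integral_hasDerivAt_right (Hint z 0 b le_rfl hb.le) hmeasb hcontb
  have hG1 : HasDerivAt (fun r' => ∫ s in (0:ℝ)..(R r' z), s * vz s z)
      (b * vz b z * deriv (fun r => R r z) r₀) r₀ := by have h := hΦ.comp r₀ hRd; exact h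
  have hmeasr : StronglyMeasurableAtFilter (fun s : ℝ => s * vz s 0) (nhds r₀) :=
    ContinuousOn.stronglyMeasurableAtFilter isOpen_Ioi ((CHw 0).mono Ioi_subset_Ici_self) r₀ hr₀
  have hcontr : ContinuousAt (fun s : ℝ => s * vz s 0) r₀ :=
    ((CHw 0).mono Ioi_subset_Ici_self).continuousAt (isOpen_Ioi.mem_nhds hr₀)
  have hG2 : HasDerivAt (fun r' => ∫ s in (0:ℝ)..r', s * vz s 0) (r₀ * vz r₀ 0) r₀ :=
    intervalIntegral.integral_hasDerivAt_right (Hint 0 0 r₀ le_rfl hr₀.le) hmeasr hcontr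
  have hEq : (fun r' => ∫ s in (0:ℝ)..r', s * vz s 0)
      =ᶠ[nhds r₀] (fun r' => ∫ s in (0:ℝ)..(R r' z), s * vz s z) := by
    filter_upwards [isOpen_Ioi.mem_nhds hr₀] with x hx
    exact (keyint x hx z).symm
  have hG1' : HasDerivAt (fun r' => ∫ s in (0:ℝ)..r', s * vz s 0)
      (b * vz b z * deriv (fun r => R r z) r₀) r₀ := hG1.congr_of_eventuallyEq hEq
  have hkey : r₀ * vz r₀ 0 = b * vz b z * deriv (fun r => R r z) r₀ := hG2.unique hG1'
  constructor
  · have hpow : deriv (fun r' => R r' z ^ 2) r₀ = 2 * b ^ 1 * deriv (fun r => R r z) r₀ := by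
      have h3 : HasDerivAt (fun r' => R r' z ^ 2)
          ((2:ℕ) * (R r₀ z) ^ (2 - 1) * deriv (fun r => R r z) r₀) r₀ := hRd.pow 2
      rw [h3.deriv]; simp [hbdef2]
    simp only [hρ, hUin]
    rw [hpow, pow_one]
    have hbne : b ≠ 0 := hb.ne'
    have hdne : deriv (fun r => R r z) r₀ ≠ 0 := hd.ne'
    field_simp
    rw [hkey]; ring
  · rw [(hRz r₀ z hr₀).deriv]
    rw [div_mul_cancel₀ _ (hvz (R r₀ z) z).ne']
end
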